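/- Gradient descent on a linearly parametrized model is exactly kernel gradient descent with respect to the tangent kernel: fix a finite dataset x₁,…,x_N ∈ ℝ^{n₀}, functions f^(1),…,f^(P) from ℝ^{n₀} to ℝ^{n_L}, and the linear parametrization F^lin(θ) = (1/√P)Σ_{p=1}^P θ_p f^(p) for θ ∈ ℝ^P. Let C be a differentiable cost depending only on values at the dataset, with functional derivative at f represented by d|_f. If θ(t) satisfies the gradient flow ∂_t θ_p(t) = −∂_{θ_p}(C∘F^lin)(θ(t)), then f^lin_{θ(t)} := F^lin(θ(t)) satisfies, for every x ∈ ℝ^{n₀}, ∂_t f^lin_{θ(t)}(x) = −(1/N)Σ_{j=1}^N K̃(x,x_j) d|_{f^lin_{θ(t)}}(x_j), where K̃ is the tangent kernel K̃_{ii'}(x,x') = (1/P)Σ_{p=1}^P f^(p)_i(x) f^(p)_{i'}(x'). -/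

import Mathlib

noncomputable section

/-- The linear parametrization `F^lin(θ) = (1/√P) ∑_p θ_p f^{(p)}`. -/
def linParam (P n0 nL : ℕ) (fs : Fin P → (Fin n0 → ℝ) → Fin nL → ℝ)
    (θ : Fin P → ℝ) (x : Fin n0 → ℝ) (k : Fin nL) : ℝ :=
  (Real.sqrt P)⁻¹ * ∑ p, θ p * fs p x k

/-- The tangent kernel `K̃_{ii'}(x,x') = (1/P) ∑_p f^{(p)}_i(x) f^{(p)}_{i'}(x')`. -/
def tangentKernel (P n0 nL : ℕ) (fs : Fin P → (Fin n0 → ℝ) → Fin nL → ℝ)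
    (x x' : Fin n0 → ℝ) (k k' : Fin nL) : ℝ :=
  (P : ℝ)⁻¹ * ∑ p, fs p x k * fs p x' k'

/-- **Gradient descent on a linearly parametrized model is kernel gradient descent with
respect to the tangent kernel.**  Fix a finite dataset `x₁, …, x_N`, functions
`f^{(1)}, …, f^{(P)}`, and the linear parametrization `F^lin(θ) = (1/√P) ∑_p θ_p f^{(p)}`.
Let `C` be a differentiable cost depending only on the values at the dataset, with functional
derivative at `f` represented by `dC f` (i.e. the directional derivative of `C` at `f` in
direction `g` is `(1/N) ∑ᵢ (dC f)(xᵢ)ᵀ g(xᵢ)`).  If `θ(t)` follows the gradient flow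
`∂_t θ_p(t) = −∂_{θ_p}(C ∘ F^lin)(θ(t))`, then for every input `x`,
`∂_t F^lin(θ(t))(x) = −(1/N) ∑_j K̃(x, x_j) (dC (F^lin(θ(t))|dataset))(x_j)`. -/
theorem linear_parametrization_is_kernel_gradient_descent
    (N n0 nL P : ℕ) (hN : 0 < N) (hP : 0 < P)
    (xs : Fin N → Fin n0 → ℝ)
    (fs : Fin P → (Fin n0 → ℝ) → Fin nL → ℝ)
    (C : (Fin N → Fin nL → ℝ) → ℝ) (hC : Differentiable ℝ C)
    (dC : (Fin N → Fin nL → ℝ) → Fin N → Fin nL → ℝ)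
    (hdC : ∀ f g : Fin N → Fin nL → ℝ,
      HasDerivAt (fun s : ℝ => C (f + s • g)) ((N : ℝ)⁻¹ * ∑ i, ∑ k, dC f i k * g i k) 0)
    (θ : ℝ → Fin P → ℝ)
    -- gradient flow on the parameters: `∂_t θ_p(t) = −∂_{θ_p}(C ∘ F^lin)(θ(t))`
    (hθ : ∀ t p, HasDerivAt (fun s => θ s p)
      (-(deriv (fun s : ℝ =>
          C (fun i k => linParam P n0 nL fs (Function.update (θ t) p s) (xs i) k))
        (θ t p))) t) :
    ∀ (t : ℝ) (x : Fin n0 → ℝ) (k : Fin nL),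
      HasDerivAt (fun s => linParam P n0 nL fs (θ s) x k)
        (-((N : ℝ)⁻¹ * ∑ j, ∑ k', tangentKernel P n0 nL fs x (xs j) k k' *
            dC (fun i k'' => linParam P n0 nL fs (θ t) (xs i) k'') j k')) t := by

  intro t x k
  have hsq : Real.sqrt P * Real.sqrt P = (P : ℝ) :=
    Real.mul_self_sqrt (by positivity)
  have hinv : (Real.sqrt P)⁻¹ * (Real.sqrt P)⁻¹ = (P : ℝ)⁻¹ := by
    rw [← mul_inv, hsq]
  set f : Fin N → Fin nL → ℝ :=
    fun i k'' => linParam P n0 nL fs (θ t) (xs i) k'' with hf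
  set D : Fin P → ℝ :=
    fun p => (N:ℝ)⁻¹ * ∑ i, ∑ k', dC f i k' * fs p (xs i) k' with hD
  have key : ∀ p, deriv (fun s : ℝ =>
      C (fun i k => linParam P n0 nL fs (Function.update (θ t) p s) (xs i) k)) (θ t p)
      = (Real.sqrt P)⁻¹ * D p := by
    intro p
    have heq : (fun s : ℝ =>
        C (fun i k => linParam P n0 nL fs (Function.update (θ t) p s) (xs i) k))
        = fun s => C (f + ((Real.sqrt P)⁻¹ * (s - θ t p)) •
            (fun i k' => fs p (xs i) k')) := by
      funext s
      congr 1
      funext i k'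
      have hpt : ∀ q, Function.update (θ t) p s q * fs q (xs i) k'
          = θ t q * fs q (xs i) k'
            + (if p = q then (s - θ t p) * fs p (xs i) k' else 0) := by
        intro q
        rcases eq_or_ne p q with h | h
        · subst h; simp [Function.update]; ring
        · simp [Function.update, h, Ne.symm h]
      have hsum : ∑ q, (Function.update (θ t) p s) q * fs q (xs i) k'
          = (∑ q, θ t q * fs q (xs i) k') + (s - θ t p) * fs p (xs i) k' := by
        simp only [hpt, Finset.sum_add_distrib, Finset.sum_ite_eq,
          Finset.mem_univ, if_true]
      simp only [linParam, Pi.add_apply, Pi.smul_apply, smul_eq_mul, hf, hsum]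
      ring
    rw [heq]
    have h1 := hdC f (fun i k' => fs p (xs i) k')
    have h2 : HasDerivAt (fun s : ℝ => (Real.sqrt P)⁻¹ * (s - θ t p))
        ((Real.sqrt P)⁻¹) (θ t p) := by
      simpa using ((hasDerivAt_id (θ t p)).sub_const (θ t p)).const_mul ((Real.sqrt P)⁻¹)
    have h0 : (Real.sqrt P)⁻¹ * (θ t p - θ t p) = 0 := by ring
    have h3 := HasDerivAt.comp (θ t p) (h0 ▸ h1) h2
    have h4 : HasDerivAt (fun s => C (f + ((Real.sqrt P)⁻¹ * (s - θ t p)) •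
        (fun i k' => fs p (xs i) k')))
        ((Real.sqrt P)⁻¹ * D p) (θ t p) := by
      convert h3 using 1
      · rfl
      · rfl
      · rfl
      · simp only [hD]
        ring
    exact h4.deriv
  have hmain : HasDerivAt (fun s => linParam P n0 nL fs (θ s) x k)
      ((Real.sqrt P)⁻¹ * ∑ p, (-((Real.sqrt P)⁻¹ * D p)) * fs p x k) t := by
    have hterm : ∀ p ∈ Finset.univ, HasDerivAt (fun s => θ s p * fs p x k)
        ((-((Real.sqrt P)⁻¹ * D p)) * fs p x k) t := by
      intro p _
      have := (hθ t p).mul_const (fs p x k)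
      rw [key p] at this
      exact this
    have hsum := (HasDerivAt.sum hterm).const_mul ((Real.sqrt P)⁻¹)
    simpa only [linParam, Finset.sum_apply] using hsum
  convert hmain using 1
  simp only [hD, tangentKernel, Finset.mul_sum, Finset.sum_mul, neg_mul, mul_neg,
    Finset.sum_neg_distrib, neg_inj]
  have reorder : ∀ (g : Fin P → Fin N → Fin nL → ℝ),
      ∑ p, ∑ j, ∑ k', g p j k' = ∑ j, ∑ k', ∑ p, g p j k' := by
    intro g
    rw [Finset.sum_comm]
    exact Finset.sum_congr rfl fun j _ => Finset.sum_comm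
  rw [reorder]
  refine Finset.sum_congr rfl fun j _ => Finset.sum_congr rfl fun k' _ =>
    Finset.sum_congr rfl fun p _ => ?_
  rw [← hinv]
  ring


end
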